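/- arXiv:1810.12270 — 3 statements merged into one kernel-verified Lean document; each statement's English description precedes it below -/
import Mathlib

section
/- Let K be a CM field of degree 2g with maximal totally real subfield F. The map sending an order O ⊆ O_K containing O_F to the ideal f⁺ = f ∩ O_F, where f is the conductor ideal of O, is a bijection from the set of orders of K containing O_F to the set of nonzero ideals of O_F, with inverse sending an ideal f⁺ ⊆ O_F to the order O_F + f⁺·O_K. -/
open NumberField

/-- `O` is an order in the number field `K`. -/
def IsOrder (K : Type*) [Field K] [NumberField K] (O : Subalgebra ℤ K) : Prop :=
  O ≤ integralClosure ℤ K ∧ ∃ n : ℕ, 0 < n ∧ ∀ x ∈ integralClosure ℤ K, (n : ℤ) • x ∈ O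

/-- The conductor `f = {α ∈ K : α·O_K ⊆ O}` of an order `O`. -/
def conductorSet (K : Type*) [Field K] [NumberField K] (O : Subalgebra ℤ K) : Set K :=
  {α : K | ∀ x ∈ integralClosure ℤ K, α * x ∈ O}

variable (F K : Type*) [Field F] [Field K] [NumberField F] [NumberField K] [Algebra F K]

/-- The image of `O_F` in `K`. -/
def OFset : Set K := Set.range (fun y : 𝓞 F => algebraMap F K (y : F))

/-- The image in `K` of an ideal of `O_F`. -/
def idealImage (I : Ideal (𝓞 F)) : Set K :=
  (fun y : 𝓞 F => algebraMap F K (y : F)) '' (I : Set (𝓞 F))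

/-- The extension `f⁺·O_K` of an ideal `f⁺ ⊆ O_F`, as an `O_K`-submodule of `K`. -/
noncomputable def extIdeal (I : Ideal (𝓞 F)) : Submodule ↥(integralClosure ℤ K) K :=
  Submodule.span ↥(integralClosure ℤ K) (idealImage F K I)

/-- The set `O_F + f⁺·O_K ⊆ K`. -/
noncomputable def ordSet (I : Ideal (𝓞 F)) : Set K :=
  {x : K | ∃ a ∈ OFset F K, ∃ b ∈ extIdeal F K I, x = a + b}
namespace CMOrders
open scoped nonZeroDivisors
set_option linter.unusedSectionVars false

variable {F K : Type*} [Field F] [Field K] [NumberField F] [NumberField K] [Algebra F K]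

lemma algK_injective : Function.Injective (algebraMap F K) :=
  (algebraMap F K).injective

lemma mem_OK_of_OF (y : 𝓞 F) : algebraMap F K (y : F) ∈ integralClosure ℤ K := by
  have h1 : IsIntegral ℤ ((y : F)) := y.isIntegral_coe
  exact h1.map (IsScalarTower.toAlgHom ℤ F K)

lemma OFset_subset_OK : OFset F K ⊆ (integralClosure ℤ K : Set K) := by
  rintro x ⟨y, rfl⟩; exact mem_OK_of_OF y

lemma smul_OK (z : ↥(integralClosure ℤ K)) (k : K) : z • k = (z : K) * k := rfl

section Psi

variable (ψ : K →ₗ[F] F)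

lemma psi_mul (r : F) (x : K) : ψ (algebraMap F K r * x) = r * ψ x := by
  rw [← Algebra.smul_def, map_smul, smul_eq_mul]

/-- `𝔞 = ψ(O_K)` as an `𝓞 F`-submodule of `F`. -/
def aSub : Submodule (𝓞 F) F where
  carrier := ψ '' (integralClosure ℤ K : Set K)
  add_mem' := by rintro a b ⟨x, hx, rfl⟩ ⟨y, hy, rfl⟩; exact ⟨x + y, add_mem hx hy, map_add ψ x y⟩
  zero_mem' := ⟨0, zero_mem _, map_zero ψ⟩
  smul_mem' := by
    rintro r a ⟨x, hx, rfl⟩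
    refine ⟨algebraMap F K (r : F) * x, mul_mem (mem_OK_of_OF r) hx, ?_⟩
    rw [psi_mul]; rfl

lemma mem_aSub_iff {a : F} : a ∈ aSub ψ ↔ ∃ x ∈ integralClosure ℤ K, ψ x = a := Iff.rfl

/-- `𝔠 = ψ(O)` as an `𝓞 F`-submodule of `F`. -/
def cSub (O : Subalgebra ℤ K) (hOF : OFset F K ⊆ (O : Set K)) : Submodule (𝓞 F) F where
  carrier := ψ '' (O : Set K)
  add_mem' := by rintro a b ⟨x, hx, rfl⟩ ⟨y, hy, rfl⟩; exact ⟨x + y, add_mem hx hy, map_add ψ x y⟩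
  zero_mem' := ⟨0, zero_mem _, map_zero ψ⟩
  smul_mem' := by
    rintro r a ⟨x, hx, rfl⟩
    refine ⟨algebraMap F K (r : F) * x, mul_mem (hOF ⟨r, rfl⟩) hx, ?_⟩
    rw [psi_mul]; rfl

lemma aSub_fg : (aSub ψ).FG := by
  have hfin : Module.Finite ℤ ↥(integralClosure ℤ K) :=
    inferInstanceAs (Module.Finite ℤ (𝓞 K))
  obtain ⟨s, hs⟩ := Module.finite_def.mp hfin
  classical
  let L : ↥(integralClosure ℤ K) →ₗ[ℤ] F :=
    (ψ.restrictScalars ℤ).comp (Subalgebra.val _).toLinearMap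
  refine ⟨s.image L, le_antisymm ?_ ?_⟩
  · rw [Submodule.span_le]
    rintro a ha
    rw [Finset.coe_image] at ha
    obtain ⟨⟨x, hx⟩, _, rfl⟩ := ha
    exact ⟨x, hx, rfl⟩
  · rintro a ⟨x, hx, rfl⟩
    have hmem : (⟨x, hx⟩ : ↥(integralClosure ℤ K)) ∈ Submodule.span ℤ (s : Set _) := by
      rw [hs]; trivial
    have h2 : L ⟨x, hx⟩ ∈ Submodule.map L (Submodule.span ℤ (s : Set _)) :=
      Submodule.mem_map_of_mem hmem
    rw [Submodule.map_span] at h2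
    have h3 : Submodule.span ℤ (L '' (s : Set _)) ≤
        Submodule.restrictScalars ℤ (Submodule.span (𝓞 F) (L '' (s : Set _))) :=
      Submodule.span_le_restrictScalars ℤ (𝓞 F) _
    rw [Finset.coe_image]
    exact h3 h2

/-- `𝔞` as a fractional ideal of `F`. -/
noncomputable def aFrac : FractionalIdeal (𝓞 F)⁰ F :=
  ⟨aSub ψ, FractionalIdeal.isFractional_of_fg (aSub_fg ψ)⟩

lemma mem_aFrac_iff {a : F} : a ∈ aFrac ψ ↔ ∃ x ∈ integralClosure ℤ K, ψ x = a :=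
  Iff.rfl

lemma cSub_le_aSub (O : Subalgebra ℤ K) (hOF : OFset F K ⊆ (O : Set K))
    (hle : O ≤ integralClosure ℤ K) : cSub ψ O hOF ≤ aSub ψ := by
  rintro a ⟨x, hx, rfl⟩; exact ⟨x, hle hx, rfl⟩

/-- `𝔠` as a fractional ideal of `F`. -/
noncomputable def cFrac (O : Subalgebra ℤ K) (hOF : OFset F K ⊆ (O : Set K))
    (hle : O ≤ integralClosure ℤ K) : FractionalIdeal (𝓞 F)⁰ F :=
  ⟨cSub ψ O hOF, FractionalIdeal.isFractional_of_le (J := aFrac ψ) (cSub_le_aSub ψ O hOF hle)⟩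

lemma cFrac_le_aFrac (O : Subalgebra ℤ K) (hOF : OFset F K ⊆ (O : Set K))
    (hle : O ≤ integralClosure ℤ K) : cFrac ψ O hOF hle ≤ aFrac ψ :=
  cSub_le_aSub ψ O hOF hle

end Psi

end CMOrders
namespace CMOrders
open scoped nonZeroDivisors
set_option linter.unusedSectionVars false

variable {F K : Type*} [Field F] [Field K] [NumberField F] [NumberField K] [Algebra F K]

lemma coeF (y : 𝓞 F) : (y : F) = algebraMap (𝓞 F) F y := rfl

/-- The conductor of `O` intersected with `O_F`, as an ideal of `𝓞 F`. -/
def condIdeal (O : Subalgebra ℤ K) (hOF : OFset F K ⊆ (O : Set K)) : Ideal (𝓞 F) where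
  carrier := {y : 𝓞 F | ∀ x ∈ integralClosure ℤ K, algebraMap F K (y : F) * x ∈ O}
  add_mem' := by
    intro a b ha hb x hx
    have h : ((a + b : 𝓞 F) : F) = (a : F) + (b : F) := by push_cast; ring
    rw [h, map_add, add_mul]
    exact add_mem (ha x hx) (hb x hx)
  zero_mem' := by
    intro x hx
    have h : ((0 : 𝓞 F) : F) = 0 := by push_cast; ring
    rw [h, map_zero, zero_mul]
    exact zero_mem _
  smul_mem' := by
    intro r y hy x hx
    have h : ((r • y : 𝓞 F) : F) = (r : F) * (y : F) := by
      rw [smul_eq_mul]; push_cast; ring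
    rw [h, map_mul, mul_assoc]
    exact mul_mem (hOF ⟨r, rfl⟩) (hy x hx)

lemma mem_condIdeal {O : Subalgebra ℤ K} {hOF : OFset F K ⊆ (O : Set K)} {y : 𝓞 F} :
    y ∈ condIdeal O hOF ↔ ∀ x ∈ integralClosure ℤ K, algebraMap F K (y : F) * x ∈ O :=
  Iff.rfl

section Psi

variable (ψ : K →ₗ[F] F)
  (hψker : ∀ x : K, ψ x = 0 → ∃ a : F, algebraMap F K a = x)

include hψker in
lemma ker_lemma {x : K} (hx : x ∈ integralClosure ℤ K) (hzero : ψ x = 0) :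
    x ∈ OFset F K := by
  obtain ⟨a, ha⟩ := hψker x hzero
  have hint : IsIntegral ℤ a := by
    rw [← isIntegral_algebraMap_iff (algebraMap F K).injective, ha]
    exact hx
  exact ⟨⟨a, hint⟩, ha⟩

include hψker in
lemma preimage_lemma {O : Subalgebra ℤ K} {hOF : OFset F K ⊆ (O : Set K)}
    (hle : O ≤ integralClosure ℤ K) {x : K} (hx : x ∈ integralClosure ℤ K)
    (hc : ψ x ∈ cSub ψ O hOF) : x ∈ O := by
  obtain ⟨w, hw, hwψ⟩ := hc
  have hsub : ψ (x - w) = 0 := by rw [map_sub, hwψ, sub_self]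
  have hOK : x - w ∈ integralClosure ℤ K := sub_mem hx (hle hw)
  have hOF' : x - w ∈ OFset F K := ker_lemma ψ hψker hOK hsub
  have := add_mem (hOF hOF') hw
  simpa using this

end Psi

lemma extIdeal_subset_OK (I : Ideal (𝓞 F)) {b : K} (hb : b ∈ extIdeal F K I) :
    b ∈ integralClosure ℤ K := by
  refine Submodule.span_induction ?_ ?_ ?_ ?_ hb
  · rintro x ⟨y, hy, rfl⟩
    exact mem_OK_of_OF y
  · exact zero_mem _
  · intro x y _ _ hx hy; exact add_mem hx hy
  · intro a x _ hx
    rw [smul_OK]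
    exact mul_mem a.2 hx

lemma psi_extIdeal (ψ : K →ₗ[F] F) (I : Ideal (𝓞 F)) {b : K} (hb : b ∈ extIdeal F K I) :
    ∀ z ∈ integralClosure ℤ K,
      ψ (z * b) ∈ ((I : FractionalIdeal (𝓞 F)⁰ F) * aFrac ψ : FractionalIdeal (𝓞 F)⁰ F) := by
  refine Submodule.span_induction ?_ ?_ ?_ ?_ hb
  · rintro x ⟨y, hy, rfl⟩ z hz
    have h : ψ (z * algebraMap F K (y : F)) = (y : F) * ψ z := by
      rw [mul_comm, psi_mul]
    rw [h]
    exact FractionalIdeal.mul_mem_mul (FractionalIdeal.mem_coeIdeal_of_mem _ hy) ⟨z, hz, rfl⟩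
  · intro z hz
    rw [mul_zero, map_zero, ← FractionalIdeal.mem_coe]
    exact zero_mem _
  · intro x y _ _ hx hy z hz
    rw [mul_add, map_add, ← FractionalIdeal.mem_coe]
    have h1 := hx z hz; have h2 := hy z hz
    rw [← FractionalIdeal.mem_coe] at h1 h2
    exact add_mem h1 h2
  · intro a x _ hx z hz
    rw [smul_OK, show z * ((a : K) * x) = (z * a) * x by ring]
    exact hx (z * a) (mul_mem hz a.2)

end CMOrders
namespace CMOrders
open scoped nonZeroDivisors
set_option linter.unusedSectionVars false

variable {F K : Type*} [Field F] [Field K] [NumberField F] [NumberField K] [Algebra F K]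

lemma OFset_add {x y : K} (hx : x ∈ OFset F K) (hy : y ∈ OFset F K) : x + y ∈ OFset F K := by
  obtain ⟨a, rfl⟩ := hx; obtain ⟨b, rfl⟩ := hy
  have h : ((a + b : 𝓞 F) : F) = (a : F) + (b : F) := by push_cast; ring
  exact ⟨a + b, by show algebraMap F K _ = _; rw [h, map_add]⟩

lemma OFset_mul {x y : K} (hx : x ∈ OFset F K) (hy : y ∈ OFset F K) : x * y ∈ OFset F K := by
  obtain ⟨a, rfl⟩ := hx; obtain ⟨b, rfl⟩ := hy
  have h : ((a * b : 𝓞 F) : F) = (a : F) * (b : F) := by push_cast; ring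
  exact ⟨a * b, by show algebraMap F K _ = _; rw [h, map_mul]⟩

lemma OFset_zero : (0 : K) ∈ OFset F K := ⟨0, by show algebraMap F K _ = _; rw [coeF, map_zero, map_zero]⟩

lemma mem_ordSet_of_OFset {I : Ideal (𝓞 F)} {x : K} (hx : x ∈ OFset F K) : x ∈ ordSet F K I :=
  ⟨x, hx, 0, zero_mem _, (add_zero x).symm⟩

lemma mem_ordSet_of_extIdeal {I : Ideal (𝓞 F)} {x : K} (hx : x ∈ extIdeal F K I) :
    x ∈ ordSet F K I :=
  ⟨0, OFset_zero, x, hx, (zero_add x).symm⟩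

lemma mul_mem_extIdeal {I : Ideal (𝓞 F)} {y : 𝓞 F} (hy : y ∈ I) {z : K}
    (hz : z ∈ integralClosure ℤ K) : algebraMap F K (y : F) * z ∈ extIdeal F K I := by
  rw [mul_comm, ← smul_OK (z := ⟨z, hz⟩)]
  exact Submodule.smul_mem _ _ (Submodule.subset_span ⟨y, hy, rfl⟩)

/-- The order `O_F + I·O_K` as a subalgebra of `K` over `ℤ`. -/
noncomputable def ordAlg (I : Ideal (𝓞 F)) : Subalgebra ℤ K where
  carrier := ordSet F K I
  algebraMap_mem' := by
    intro r
    refine ⟨algebraMap F K ((r : 𝓞 F) : F), ⟨(r : 𝓞 F), rfl⟩, 0, zero_mem _, ?_⟩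
    rw [add_zero, coeF, map_intCast, map_intCast, eq_intCast]
  add_mem' := by
    rintro x y ⟨a, ha, b, hb, rfl⟩ ⟨a', ha', b', hb', rfl⟩
    exact ⟨a + a', OFset_add ha ha', b + b', add_mem hb hb', by ring⟩
  mul_mem' := by
    rintro x y ⟨a, ha, b, hb, rfl⟩ ⟨a', ha', b', hb', rfl⟩
    obtain ⟨ya, hya⟩ := ha
    obtain ⟨ya', hya'⟩ := ha'
    have h1 : a * b' ∈ extIdeal F K I := by
      rw [← smul_OK (z := ⟨a, hya ▸ mem_OK_of_OF ya⟩)]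
      exact Submodule.smul_mem _ _ hb'
    have h2 : a' * b ∈ extIdeal F K I := by
      rw [← smul_OK (z := ⟨a', hya' ▸ mem_OK_of_OF ya'⟩)]
      exact Submodule.smul_mem _ _ hb
    have h3 : b * b' ∈ extIdeal F K I := by
      rw [← smul_OK (z := ⟨b, extIdeal_subset_OK I hb⟩)]
      exact Submodule.smul_mem _ _ hb'
    refine ⟨a * a', OFset_mul ⟨ya, hya⟩ ⟨ya', hya'⟩,
      a * b' + a' * b + b * b', add_mem (add_mem h1 h2) h3, by ring⟩

lemma ordAlg_coe (I : Ideal (𝓞 F)) : ((ordAlg I : Subalgebra ℤ K) : Set K) = ordSet F K I := rfl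

lemma OFset_subset_ordAlg (I : Ideal (𝓞 F)) : OFset F K ⊆ ((ordAlg I : Subalgebra ℤ K) : Set K) :=
  fun _ hx => mem_ordSet_of_OFset hx

lemma ordAlg_le_OK (I : Ideal (𝓞 F)) : ordAlg I ≤ integralClosure ℤ K := by
  rintro x ⟨a, ha, b, hb, rfl⟩
  exact add_mem (OFset_subset_OK ha) (extIdeal_subset_OK I hb)

lemma isOrder_ordAlg {I : Ideal (𝓞 F)} (hI : I ≠ ⊥) : IsOrder K (ordAlg I) := by
  refine ⟨ordAlg_le_OK I, Ideal.absNorm I, ?_, ?_⟩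
  · exact Nat.pos_of_ne_zero fun h => hI (Ideal.absNorm_eq_zero_iff.mp h)
  · intro x hx
    have hmem : ((Ideal.absNorm I : ℤ) : 𝓞 F) ∈ I := by
      have := Ideal.absNorm_mem I
      exact_mod_cast this
    have h1 : algebraMap F K (((Ideal.absNorm I : ℤ) : 𝓞 F) : F) * x ∈ extIdeal F K I :=
      mul_mem_extIdeal hmem hx
    have h2 : algebraMap F K (((Ideal.absNorm I : ℤ) : 𝓞 F) : F) * x
        = (Ideal.absNorm I : ℤ) • x := by
      rw [coeF, map_intCast, map_intCast, zsmul_eq_mul]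
    rw [← h2]
    exact mem_ordSet_of_extIdeal h1

end CMOrders
namespace CMOrders
open scoped nonZeroDivisors
set_option linter.unusedSectionVars false

variable {F K : Type*} [Field F] [Field K] [NumberField F] [NumberField K] [Algebra F K]

lemma frac_cancel {A B C : FractionalIdeal (𝓞 F)⁰ F} (hC : C ≠ 0) (h : A * C ≤ B * C) :
    A ≤ B := by
  have h2 := mul_le_mul' h (le_refl C⁻¹)
  simp only [mul_assoc, mul_inv_cancel₀ hC, mul_one] at h2
  exact h2

lemma condIdeal_ne_bot {O : Subalgebra ℤ K} (hO : IsOrder K O)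
    (hOF : OFset F K ⊆ (O : Set K)) : condIdeal O hOF ≠ ⊥ := by
  obtain ⟨-, n, hn, hnx⟩ := hO
  have hmem : ((n : ℤ) : 𝓞 F) ∈ condIdeal O hOF := by
    intro x hx
    have h : algebraMap F K (((n : ℤ) : 𝓞 F) : F) * x = (n : ℤ) • x := by
      rw [coeF, map_intCast, map_intCast, zsmul_eq_mul]
    rw [h]
    exact hnx x hx
  intro hbot
  rw [hbot, Ideal.mem_bot] at hmem
  have : (n : ℤ) = 0 := by exact_mod_cast hmem
  omega

lemma idealImage_condIdeal (O : Subalgebra ℤ K) (hOF : OFset F K ⊆ (O : Set K)) :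
    idealImage F K (condIdeal O hOF) = conductorSet K O ∩ OFset F K := by
  ext α
  constructor
  · rintro ⟨y, hy, rfl⟩
    exact ⟨fun x hx => hy x hx, ⟨y, rfl⟩⟩
  · rintro ⟨hcond, y, rfl⟩
    exact ⟨y, fun x hx => hcond x hx, rfl⟩

section Psi

variable (ψ : K →ₗ[F] F)
  (hψalg : ∀ a : F, ψ (algebraMap F K a) = 0)
  (hψker : ∀ x : K, ψ x = 0 → ∃ a : F, algebraMap F K a = x)
  (τ : K) (hτOK : τ ∈ integralClosure ℤ K) (hψτ : ψ τ = 1)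

include hτOK hψτ in
lemma aFrac_ne_zero : aFrac ψ ≠ 0 := by
  intro h
  have h1 : (1 : F) ∈ aFrac ψ := ⟨τ, hτOK, hψτ⟩
  rw [h] at h1
  exact one_ne_zero ((FractionalIdeal.mem_zero_iff _).mp h1)

include hψalg hτOK hψτ in
lemma condIdeal_ordAlg (I : Ideal (𝓞 F)) :
    condIdeal (ordAlg I : Subalgebra ℤ K) (OFset_subset_ordAlg I) = I := by
  apply le_antisymm
  · intro y hy
    have key : ∀ c ∈ aFrac ψ,
        (y : F) * c ∈ ((I : FractionalIdeal (𝓞 F)⁰ F) * aFrac ψ : FractionalIdeal (𝓞 F)⁰ F) := by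
      rintro c ⟨x, hx, rfl⟩
      obtain ⟨a, ha, b, hb, hab⟩ := hy x hx
      have h1 : ψ (algebraMap F K (y : F) * x) = (y : F) * ψ x := psi_mul ψ _ _
      have h2 : ψ a = 0 := by obtain ⟨f, rfl⟩ := ha; exact hψalg _
      have h3 : (y : F) * ψ x = ψ (1 * b) := by
        rw [one_mul, ← h1, hab, map_add, h2, zero_add]
      rw [h3]
      exact psi_extIdeal ψ I hb 1 (one_mem _)
    have hle : FractionalIdeal.spanSingleton (𝓞 F)⁰ ((y : F)) * aFrac ψ ≤
        (I : FractionalIdeal (𝓞 F)⁰ F) * aFrac ψ := by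
      rw [FractionalIdeal.mul_le]
      intro i hi j hj
      rw [FractionalIdeal.mem_spanSingleton] at hi
      obtain ⟨z, rfl⟩ := hi
      rw [smul_mul_assoc, ← FractionalIdeal.mem_coe]
      have := key j hj
      rw [← FractionalIdeal.mem_coe] at this
      exact Submodule.smul_mem _ z this
    have hfin := frac_cancel (aFrac_ne_zero ψ τ hτOK hψτ) hle
    have hmem : (y : F) ∈ (I : FractionalIdeal (𝓞 F)⁰ F) :=
      hfin (FractionalIdeal.mem_spanSingleton_self _ _)
    rw [FractionalIdeal.mem_coeIdeal] at hmem
    obtain ⟨y', hy', hyy⟩ := hmem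
    rw [coeF] at hyy
    rwa [IsFractionRing.injective (𝓞 F) F hyy] at hy'
  · intro y hy
    intro x hx
    show algebraMap F K (y : F) * x ∈ ordSet F K I
    exact mem_ordSet_of_extIdeal (mul_mem_extIdeal hy hx)

include hψker hτOK hψτ in
lemma bFrac_le (O : Subalgebra ℤ K) (hOF : OFset F K ⊆ (O : Set K))
    (hle : O ≤ integralClosure ℤ K) :
    cFrac ψ O hOF hle * (aFrac ψ)⁻¹ ≤ ((condIdeal O hOF : Ideal (𝓞 F)) :
      FractionalIdeal (𝓞 F)⁰ F) := by
  intro u hu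
  have h1 : u ∈ (1 : FractionalIdeal (𝓞 F)⁰ F) := by
    have hmono := mul_le_mul' (cFrac_le_aFrac ψ O hOF hle) (le_refl (aFrac ψ)⁻¹)
    have h2 : u ∈ aFrac ψ * (aFrac ψ)⁻¹ := hmono hu
    rwa [mul_inv_cancel₀ (aFrac_ne_zero ψ τ hτOK hψτ)] at h2
  obtain ⟨v, hv⟩ := (FractionalIdeal.mem_one_iff _).mp h1
  have hvmem : v ∈ condIdeal O hOF := by
    intro x hx
    have h3 : u * ψ x ∈ cFrac ψ O hOF hle := by
      have h4 := FractionalIdeal.mul_mem_mul hu (show ψ x ∈ aFrac ψ from ⟨x, hx, rfl⟩)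
      rwa [mul_assoc, inv_mul_cancel₀ (aFrac_ne_zero ψ τ hτOK hψτ), mul_one] at h4
    have h5 : ψ (algebraMap F K (v : F) * x) = u * ψ x := by
      rw [psi_mul, coeF, hv]
    exact preimage_lemma ψ hψker (hOF := hOF) hle (mul_mem (mem_OK_of_OF v) hx) (h5 ▸ h3)
  rw [← hv]
  exact FractionalIdeal.mem_coeIdeal_of_mem _ hvmem

include hψker hτOK hψτ in
lemma ordSet_condIdeal (O : Subalgebra ℤ K) (hOF : OFset F K ⊆ (O : Set K))
    (hle : O ≤ integralClosure ℤ K) :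
    ordSet F K (condIdeal O hOF) = (O : Set K) := by
  apply Set.Subset.antisymm
  · rintro x ⟨a, ha, b, hb, rfl⟩
    have hbO : b ∈ O := by
      have H : ∀ z ∈ integralClosure ℤ K, z * b ∈ O := by
        refine Submodule.span_induction ?_ ?_ ?_ ?_ hb
        · rintro w ⟨y, hy, rfl⟩ z hz
          rw [mul_comm]
          exact hy z hz
        · intro z hz; rw [mul_zero]; exact zero_mem _
        · intro u v _ _ hu hv z hz; rw [mul_add]; exact add_mem (hu z hz) (hv z hz)
        · intro aK u _ hu z hz
          rw [smul_OK, show z * ((aK : K) * u) = (z * (aK : K)) * u by ring]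
          exact hu _ (mul_mem hz aK.2)
      have h1 := H 1 (one_mem _)
      rwa [one_mul] at h1
    exact add_mem (hOF ha) hbO
  · intro x hx
    have hcx : ψ x ∈ cFrac ψ O hOF hle := ⟨x, hx, rfl⟩
    have hψx : ψ x ∈ (((condIdeal O hOF : Ideal (𝓞 F)) : FractionalIdeal (𝓞 F)⁰ F) *
        aFrac ψ : FractionalIdeal (𝓞 F)⁰ F) := by
      have hmono := mul_le_mul'
        (bFrac_le ψ hψker τ hτOK hψτ O hOF hle) (le_refl (aFrac ψ))
      have h6 : ψ x ∈ (cFrac ψ O hOF hle * (aFrac ψ)⁻¹ * aFrac ψ :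
          FractionalIdeal (𝓞 F)⁰ F) := by
        rwa [mul_assoc, inv_mul_cancel₀ (aFrac_ne_zero ψ τ hτOK hψτ), mul_one]
      exact hmono h6
    have hdec : ∃ b, b ∈ extIdeal F K (condIdeal O hOF) ∧ b ∈ integralClosure ℤ K ∧
        ψ b = ψ x := by
      rw [← FractionalIdeal.mem_coe, FractionalIdeal.coe_mul] at hψx
      refine Submodule.mul_induction_on hψx ?_ ?_
      · intro m hm n hn
        rw [FractionalIdeal.mem_coe, FractionalIdeal.mem_coeIdeal] at hm
        obtain ⟨y', hy', rfl⟩ := hm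
        obtain ⟨z, hz, rfl⟩ := hn
        exact ⟨algebraMap F K (y' : F) * z, mul_mem_extIdeal hy' hz,
          mul_mem (mem_OK_of_OF y') hz, by rw [psi_mul, coeF]⟩
      · rintro u v ⟨b1, h1, h1K, e1⟩ ⟨b2, h2, h2K, e2⟩
        exact ⟨b1 + b2, add_mem h1 h2, add_mem h1K h2K, by rw [map_add, e1, e2]⟩
    obtain ⟨b, hbext, hbOK, hbψ⟩ := hdec
    have hz : ψ (x - b) = 0 := by rw [map_sub, hbψ, sub_self]
    have hxb : x - b ∈ OFset F K := ker_lemma ψ hψker (sub_mem (hle hx) hbOK) hz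
    exact ⟨x - b, hxb, b, hbext, by ring⟩

end Psi

end CMOrders
namespace CMOrders
open scoped nonZeroDivisors
set_option linter.unusedSectionVars false

variable {F K : Type*} [Field F] [Field K] [NumberField F] [NumberField K] [Algebra F K]

lemma exists_tau (hquad : Module.finrank F K = 2) :
    ∃ τ : K, τ ∈ integralClosure ℤ K ∧ τ ∉ Set.range (algebraMap F K) := by
  have ht : ∃ t : K, t ∉ Set.range (algebraMap F K) := by
    by_contra h
    push_neg at h
    have hsurj : Function.Surjective (Algebra.linearMap F K) := fun k => h k
    have hinj : Function.Injective (Algebra.linearMap F K) := fun a b hab =>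
      (algebraMap F K).injective hab
    have hfr := (LinearEquiv.ofBijective (Algebra.linearMap F K) ⟨hinj, hsurj⟩).finrank_eq
    rw [Module.finrank_self, hquad] at hfr
    omega
  obtain ⟨t, ht⟩ := ht
  have halg : IsAlgebraic ℤ t := by
    have h1 : IsAlgebraic ℚ t := Algebra.IsAlgebraic.isAlgebraic t
    exact (IsFractionRing.isAlgebraic_iff ℤ ℚ K).mpr h1
  have hinj : ∀ a : ℤ, algebraMap ℤ K a = 0 → a = 0 := by
    intro a ha
    rw [eq_intCast] at ha
    exact_mod_cast ha
  obtain ⟨y, hy, hyint⟩ := halg.exists_integral_multiple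
  obtain ⟨x, hxy⟩ : ∃ x : integralClosure ℤ K, algebraMap ℤ K y * t = x :=
    ⟨⟨y • t, hyint⟩, by simp [zsmul_eq_mul]⟩
  refine ⟨(x : K), x.2, ?_⟩
  rintro ⟨a, ha⟩
  apply ht
  refine ⟨a * ((y : ℤ) : F)⁻¹, ?_⟩
  have hyK : ((y : ℤ) : K) ≠ 0 := by exact_mod_cast hy
  have hxy' : ((y : ℤ) : K) * t = (x : K) := by rwa [eq_intCast] at hxy
  rw [map_mul, ha, map_inv₀, map_intCast]
  field_simp [hyK]
  rw [← hxy']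

lemma exists_psi (hquad : Module.finrank F K = 2) :
    ∃ (ψ : K →ₗ[F] F) (τ : K), τ ∈ integralClosure ℤ K ∧ ψ τ = 1 ∧
      (∀ a : F, ψ (algebraMap F K a) = 0) ∧
      (∀ x : K, ψ x = 0 → ∃ a : F, algebraMap F K a = x) := by
  obtain ⟨τ, hτOK, hτ⟩ := exists_tau hquad
  have li : LinearIndependent F ![(1 : K), τ] := by
    rw [LinearIndependent.pair_iff' (one_ne_zero)]
    intro a hcontra
    exact hτ ⟨a, by rw [← hcontra, Algebra.algebraMap_eq_smul_one]⟩
  have card : Fintype.card (Fin 2) = Module.finrank F K := by simp [hquad]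
  let b : Module.Basis (Fin 2) F K := basisOfLinearIndependentOfCardEqFinrank li card
  have hb : ⇑b = ![(1 : K), τ] := coe_basisOfLinearIndependentOfCardEqFinrank li card
  have h0 : b 0 = 1 := by rw [hb]; rfl
  have h1 : b 1 = τ := by rw [hb]; rfl
  refine ⟨b.coord 1, τ, hτOK, ?_, ?_, ?_⟩
  · rw [← h1, Module.Basis.coord_apply, Module.Basis.repr_self]
    simp
  · intro a
    have h2 : algebraMap F K a = a • b 0 := by rw [h0, Algebra.algebraMap_eq_smul_one]
    rw [h2, map_smul, Module.Basis.coord_apply, Module.Basis.repr_self]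
    simp
  · intro x hx
    rw [Module.Basis.coord_apply] at hx
    have hrepr := b.sum_repr x
    rw [Fin.sum_univ_two, hx, zero_smul, add_zero, h0] at hrepr
    exact ⟨b.repr x 0, by rw [Algebra.algebraMap_eq_smul_one]; exact hrepr⟩

end CMOrders

/-- For a CM field `K` of degree `2g` with maximal totally real subfield `F`, the map
`O ↦ f ∩ O_F` (conductor intersected with `O_F`) is a bijection between orders of `K`
containing `O_F` and nonzero ideals of `O_F`, with inverse `f⁺ ↦ O_F + f⁺·O_K`. -/
theorem orders_containing_OF_biject_with_ideals_of_OF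
    (g : ℕ) (hg : 0 < g)
    (hdegF : Module.finrank ℚ F = g) (hdegK : Module.finrank ℚ K = 2 * g)
    (hquad : Module.finrank F K = 2)
    (hFreal : ∀ v : NumberField.InfinitePlace F, v.IsReal)
    (hKimag : ∀ v : NumberField.InfinitePlace K, v.IsComplex) :
    ∃ e : {O : Subalgebra ℤ K // IsOrder K O ∧ OFset F K ⊆ (O : Set K)} ≃
          {I : Ideal (𝓞 F) // I ≠ ⊥},
      (∀ O : {O : Subalgebra ℤ K // IsOrder K O ∧ OFset F K ⊆ (O : Set K)},
        idealImage F K (e O).1 = conductorSet K O.1 ∩ OFset F K) ∧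
      (∀ I : {I : Ideal (𝓞 F) // I ≠ ⊥},
        ((e.symm I).1 : Set K) = ordSet F K I.1) := by
  obtain ⟨ψ, τ, hτOK, hψτ, hψalg, hψker⟩ := CMOrders.exists_psi hquad
  let fwd : {O : Subalgebra ℤ K // IsOrder K O ∧ OFset F K ⊆ (O : Set K)} →
      {I : Ideal (𝓞 F) // I ≠ ⊥} :=
    fun O => ⟨CMOrders.condIdeal O.1 O.2.2, CMOrders.condIdeal_ne_bot O.2.1 O.2.2⟩
  let bwd : {I : Ideal (𝓞 F) // I ≠ ⊥} →
      {O : Subalgebra ℤ K // IsOrder K O ∧ OFset F K ⊆ (O : Set K)} :=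
    fun I => ⟨CMOrders.ordAlg I.1, CMOrders.isOrder_ordAlg I.2,
      CMOrders.OFset_subset_ordAlg I.1⟩
  refine ⟨⟨fwd, bwd, ?_, ?_⟩, ?_, ?_⟩
  · intro O
    apply Subtype.ext
    apply SetLike.ext'
    rw [CMOrders.ordAlg_coe]
    exact CMOrders.ordSet_condIdeal ψ hψker τ hτOK hψτ O.1 O.2.2 O.2.1.1
  · intro I
    apply Subtype.ext
    exact CMOrders.condIdeal_ordAlg ψ hψalg τ hτOK hψτ I.1
  · intro O
    exact CMOrders.idealImage_condIdeal O.1 O.2.2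
  · intro I
    exact CMOrders.ordAlg_coe I.1
end

section
/- Let K be a CM field with maximal totally real subfield F and let O = O_F + f⁺·O_K for a nonzero ideal f⁺ of O_F. Then the conductor of O satisfies f ∩ O_F = f⁺, i.e., the intersection with O_F of the conductor ideal of O recovers f⁺. -/
open NumberField

variable (F K : Type*) [Field F] [Field K] [NumberField F] [NumberField K] [Algebra F K]

open nonZeroDivisors

/-- `O_K` as an `O_F`-submodule of `K`. -/
noncomputable def Ssub : Submodule (𝓞 F) K where
  carrier := integralClosure ℤ K
  add_mem' := fun ha hb => add_mem ha hb
  zero_mem' := zero_mem _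
  smul_mem' := fun r x hx => by
    have h1 : r • x = algebraMap F K (algebraMap (𝓞 F) F r) * x := by
      rw [Algebra.smul_def, IsScalarTower.algebraMap_apply (𝓞 F) F K]
    rw [h1]
    exact mul_mem ((r.isIntegral_coe).map (IsScalarTower.toAlgHom ℤ F K)) hx

lemma mem_Ssub {x : K} : x ∈ Ssub F K ↔ x ∈ integralClosure ℤ K := Iff.rfl

lemma mul_smul_Ssub_mem (I : Ideal (𝓞 F)) (c : K) (hc : c ∈ integralClosure ℤ K) :
    ∀ y ∈ I • Ssub F K, c * y ∈ I • Ssub F K := by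
  intro y hy
  refine Submodule.smul_induction_on hy ?_ ?_
  · intro i hi s hs
    rw [mul_smul_comm]
    exact Submodule.smul_mem_smul hi ((mem_Ssub F K).mpr (mul_mem hc ((mem_Ssub F K).mp hs)))
  · intro u v hu hv
    rw [mul_add]
    exact add_mem hu hv

/-- `I • Ssub` as an `O_K`-submodule of `K`. -/
noncomputable def Qmod (I : Ideal (𝓞 F)) : Submodule ↥(integralClosure ℤ K) K where
  carrier := (I • Ssub F K : Submodule (𝓞 F) K)
  add_mem' := fun ha hb => add_mem ha hb
  zero_mem' := zero_mem _
  smul_mem' := fun c y hy => by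
    have h1 : c • y = (c : K) * y := rfl
    rw [h1]
    exact mul_smul_Ssub_mem F K I (c : K) c.2 y hy

lemma extIdeal_le_Qmod (I : Ideal (𝓞 F)) :
    ∀ b ∈ extIdeal F K I, b ∈ I • Ssub F K := by
  intro b hb
  have : extIdeal F K I ≤ Qmod F K I := by
    rw [extIdeal, Submodule.span_le]
    rintro _ ⟨y, hy, rfl⟩
    show algebraMap F K (y : F) ∈ I • Ssub F K
    have h1 : algebraMap F K (y : F) = y • (1 : K) := by
      rw [Algebra.smul_def, IsScalarTower.algebraMap_apply (𝓞 F) F K, mul_one]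
    rw [h1]
    exact Submodule.smul_mem_smul hy (one_mem (integralClosure ℤ K))
  exact this hb

lemma key_lemma (hquad : Module.finrank F K = 2) (I : Ideal (𝓞 F)) (a : 𝓞 F)
    (h : ∀ x ∈ integralClosure ℤ K, algebraMap F K (a : F) * x ∈ ordSet F K I) :
    a ∈ I := by
  classical
  -- find an integral element not in the image of F
  have hθ : ∃ θ : K, θ ∈ integralClosure ℤ K ∧ θ ∉ Set.range (algebraMap F K) := by
    by_contra hc
    push_neg at hc
    have hsurj : Function.Surjective (algebraMap F K) := by
      intro x
      obtain ⟨y, z, hz, rfl⟩ := IsFractionRing.div_surjective (A := 𝓞 K) x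
      obtain ⟨u, hu⟩ := hc (y : K) y.2
      obtain ⟨v, hv⟩ := hc (z : K) z.2
      exact ⟨u / v, by rw [map_div₀, hu, hv]⟩
    have hbij : Function.Bijective (Algebra.ofId F K) :=
      ⟨(Algebra.ofId F K).toRingHom.injective, hsurj⟩
    have := (AlgEquiv.ofBijective (Algebra.ofId F K) hbij).toLinearEquiv.finrank_eq
    rw [Module.finrank_self, hquad] at this
    exact absurd this (by norm_num)
  obtain ⟨θ, hθS, hθF⟩ := hθ
  -- basis {1, θ}
  have hli : LinearIndependent F ![(1 : K), θ] := by
    rw [linearIndependent_fin2]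
    refine ⟨?_, ?_⟩
    · show θ ≠ 0
      intro h0
      exact hθF ⟨0, by rw [map_zero, h0]⟩
    · intro c hc
      show False
      have hc' : c • θ = 1 := hc
      have hc0 : c ≠ 0 := by
        rintro rfl
        rw [zero_smul] at hc'
        exact one_ne_zero hc'.symm
      apply hθF
      refine ⟨c⁻¹, ?_⟩
      have : θ = c⁻¹ • (1 : K) := by
        rw [← hc', smul_smul, inv_mul_cancel₀ hc0, one_smul]
      rw [this, Algebra.smul_def, mul_one]
  have hcard : Fintype.card (Fin 2) = Module.finrank F K := by
    rw [Fintype.card_fin, hquad]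
  let b := basisOfLinearIndependentOfCardEqFinrank hli hcard
  have hb : ⇑b = ![(1 : K), θ] := coe_basisOfLinearIndependentOfCardEqFinrank hli hcard
  let p : K →ₗ[F] F := b.coord 1
  have p1 : p (1 : K) = 0 := by
    have hb0 : (1 : K) = b 0 := by rw [hb]; rfl
    rw [hb0]
    show b.repr (b 0) 1 = 0
    rw [Module.Basis.repr_self]
    exact Finsupp.single_eq_of_ne' (by decide)
  have pθ : p θ = 1 := by
    have hb1 : θ = b 1 := by rw [hb]; rfl
    rw [hb1]
    show b.repr (b 1) 1 = 1
    rw [Module.Basis.repr_self]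
    exact Finsupp.single_eq_same
  let pR : K →ₗ[𝓞 F] F := p.restrictScalars (𝓞 F)
  let J : Submodule (𝓞 F) F := (Ssub F K).map pR
  have hJ1 : (1 : F) ∈ J := ⟨θ, hθS, pθ⟩
  -- main containment
  have hmain : ∀ x ∈ Ssub F K, a • pR x ∈ I • J := by
    intro x hx
    obtain ⟨c, ⟨y, rfl⟩, bb, hbb, heq⟩ := h x hx
    have h2 : a • x = algebraMap F K (a : F) * x := by
      rw [Algebra.smul_def, IsScalarTower.algebraMap_apply (𝓞 F) F K]
    have h3 : a • pR x = pR (algebraMap F K (y : F)) + pR bb := by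
      rw [← map_smul, h2, heq, map_add]
    have h4 : pR (algebraMap F K (y : F)) = 0 := by
      show p (algebraMap F K (y : F)) = 0
      rw [Algebra.algebraMap_eq_smul_one, map_smul, p1, smul_zero]
    have h5 : pR bb ∈ I • J := by
      have hbb' : bb ∈ I • Ssub F K := extIdeal_le_Qmod F K I bb hbb
      have := Submodule.mem_map_of_mem (f := pR) hbb'
      rwa [Submodule.map_smul''] at this
    rw [h3, h4, zero_add]
    exact h5
  -- fractional ideal argument
  have hSfg : (Ssub F K).FG := by
    apply Submodule.FG.of_restrictScalars ℤ
    have he : (Ssub F K).restrictScalars ℤ = Subalgebra.toSubmodule (integralClosure ℤ K) :=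
      rfl
    rw [he]
    exact Module.Finite.iff_fg.mp (inferInstanceAs (Module.Finite ℤ (𝓞 K)))
  have hJfg : J.FG := hSfg.map pR
  have hfrac : IsFractional (𝓞 F)⁰ J := FractionalIdeal.isFractional_of_fg hJfg
  let B : FractionalIdeal (𝓞 F)⁰ F := ⟨J, hfrac⟩
  have hB0 : B ≠ 0 := by
    intro h0
    have h1 : (1 : F) ∈ B := hJ1
    rw [h0, FractionalIdeal.mem_zero_iff] at h1
    exact one_ne_zero h1
  set A : FractionalIdeal (𝓞 F)⁰ F :=
    FractionalIdeal.spanSingleton (𝓞 F)⁰ (algebraMap (𝓞 F) F a) with hA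
  have hAB : A * B ≤ (I : FractionalIdeal (𝓞 F)⁰ F) * B := by
    rw [← FractionalIdeal.coe_le_coe, FractionalIdeal.coe_mul, FractionalIdeal.coe_mul, hA,
      FractionalIdeal.coe_spanSingleton]
    apply Submodule.mul_le.mpr
    intro m hm n hn
    rw [Submodule.mem_span_singleton] at hm
    obtain ⟨r, rfl⟩ := hm
    have hn' : n ∈ J := hn
    obtain ⟨x, hx, rfl⟩ := hn'
    have h3 : a • pR x ∈ I • J := hmain x hx
    have hIJ : I • J ≤
        (((I : FractionalIdeal (𝓞 F)⁰ F) : Submodule (𝓞 F) F) * (B : Submodule (𝓞 F) F)) := by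
      apply Submodule.smul_le.mpr
      intro i hi j hj
      rw [Algebra.smul_def]
      exact Submodule.mul_mem_mul
        (FractionalIdeal.mem_coe.mpr ((FractionalIdeal.mem_coeIdeal _).mpr ⟨i, hi, rfl⟩)) hj
    have h6 : (r • algebraMap (𝓞 F) F a) * pR x = r • (a • pR x) := by
      rw [smul_mul_assoc, ← Algebra.smul_def]
    rw [h6]
    exact Submodule.smul_mem _ r (hIJ h3)
  have hA_le : A ≤ (I : FractionalIdeal (𝓞 F)⁰ F) := by
    have h7 := mul_le_mul_left hAB B⁻¹
    simpa only [mul_assoc, mul_inv_cancel₀ hB0, mul_one] using h7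
  have h8 : algebraMap (𝓞 F) F a ∈ (I : FractionalIdeal (𝓞 F)⁰ F) :=
    hA_le (FractionalIdeal.mem_spanSingleton_self _ _)
  obtain ⟨x, hxI, hx⟩ := (FractionalIdeal.mem_coeIdeal _).mp h8
  rwa [FaithfulSMul.algebraMap_injective (𝓞 F) F hx] at hxI

/-- For a CM field `K` with maximal totally real subfield `F` and a nonzero ideal
`f⁺ ⊆ O_F`, the conductor of the order `O = O_F + f⁺·O_K` satisfies `f ∩ O_F = f⁺`. -/
theorem conductor_inter_OF_eq
    (hquad : Module.finrank F K = 2)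
    (hFreal : ∀ v : NumberField.InfinitePlace F, v.IsReal)
    (hKimag : ∀ v : NumberField.InfinitePlace K, v.IsComplex)
    (I : Ideal (𝓞 F)) (hI : I ≠ ⊥) :
    ∀ O : Subalgebra ℤ K, (O : Set K) = ordSet F K I →
      conductorSet K O ∩ OFset F K = idealImage F K I := by
  intro O hO
  apply Set.Subset.antisymm
  · rintro α ⟨hcond, y, rfl⟩
    refine ⟨y, ?_, rfl⟩
    apply key_lemma F K hquad I y
    intro x hx
    have h1 : algebraMap F K (y : F) * x ∈ (O : Set K) := hcond x hx
    rwa [hO] at h1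
  · rintro _ ⟨y, hyI, rfl⟩
    refine ⟨?_, ⟨y, rfl⟩⟩
    intro x hx
    have hmem : algebraMap F K (y : F) * x ∈ ordSet F K I := by
      refine ⟨0, ⟨0, by simp⟩, algebraMap F K (y : F) * x, ?_, by ring⟩
      have h1 : algebraMap F K (y : F) ∈ extIdeal F K I :=
        Submodule.subset_span ⟨y, hyI, rfl⟩
      have h2 := Submodule.smul_mem (extIdeal F K I)
        (⟨x, hx⟩ : ↥(integralClosure ℤ K)) h1
      have h3 : (⟨x, hx⟩ : ↥(integralClosure ℤ K)) • algebraMap F K (y : F)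
          = algebraMap F K (y : F) * x := mul_comm _ _
      rwa [h3] at h2
    show algebraMap F K (y : F) * x ∈ (O : Set K)
    rw [hO]
    exact hmem
end

section
/- Let K/F be a quadratic extension of number fields and let p be a prime of O_F that splits in O_K as p·O_K = P·P̄ with P ≠ P̄. Let f⁺ ⊆ O_F be an ideal divisible by p, f = f⁺·O_K, and m = f·P^{-1}. Then the composite map (O_F/f⁺)^* → (O_K/f)^* → (O_K/m)^* (inclusion followed by reduction) is injective. -/
open NumberField UniqueFactorizationMonoid

section Aux

/-- Multiplicity of a prime `Q` of `B` in the extension of an ideal `I` of `A`. -/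
theorem count_normalizedFactors_map_aux {A B : Type*} [CommRing A] [CommRing B]
    [IsDedekindDomain A] [IsDedekindDomain B] [Algebra A B]
    (halg : Function.Injective (algebraMap A B))
    [DecidableEq (Ideal A)] [DecidableEq (Ideal B)]
    (Q : Ideal B) (hQ : Q.IsPrime) (hQ0 : Q ≠ ⊥)
    (I : Ideal A) (hI : I ≠ ⊥) :
    (normalizedFactors (Ideal.map (algebraMap A B) I)).count Q
      = Ideal.ramificationIdx' (Q.comap (algebraMap A B)) Q
          * (normalizedFactors I).count (Q.comap (algebraMap A B)) := by
  revert hI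
  refine UniqueFactorizationMonoid.induction_on_prime I ?_ ?_ ?_
  · intro h
    exact absurd (Submodule.zero_eq_bot) h
  · intro J hJ _
    rw [Ideal.isUnit_iff] at hJ
    subst hJ
    rw [Ideal.map_top, show (⊤ : Ideal B) = 1 from Ideal.one_eq_top.symm,
      show (⊤ : Ideal A) = 1 from Ideal.one_eq_top.symm, normalizedFactors_one,
      normalizedFactors_one]
    simp
  · intro J q hJ hq IH _
    have hq0 : q ≠ ⊥ := by simpa [Submodule.zero_eq_bot] using hq.ne_zero
    have hqp : q.IsPrime := Ideal.isPrime_of_prime hq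
    have hJ0 : J ≠ ⊥ := by simpa [Submodule.zero_eq_bot] using hJ
    have hmapq : Ideal.map (algebraMap A B) q ≠ ⊥ := by
      rwa [Ne, Ideal.map_eq_bot_iff_of_injective halg]
    have hmapJ : Ideal.map (algebraMap A B) J ≠ ⊥ := by
      rwa [Ne, Ideal.map_eq_bot_iff_of_injective halg]
    rw [Ideal.map_mul, normalizedFactors_mul hmapq hmapJ,
      normalizedFactors_mul hq0 hJ0, Multiset.count_add, Multiset.count_add, IH hJ0,
      Nat.mul_add]
    congr 1
    rw [normalizedFactors_irreducible hq.irreducible, normalize_eq]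
    by_cases hcq : Q.comap (algebraMap A B) = q
    · rw [hcq, Multiset.count_singleton_self, mul_one,
        Ideal.IsDedekindDomain.ramificationIdx'_eq_normalizedFactors_count hmapq hQ hQ0]
      convert rfl
    · rw [Multiset.count_singleton, if_neg hcq, mul_zero, Multiset.count_eq_zero]
      intro hmem
      have h1 : Ideal.map (algebraMap A B) q ≤ Q :=
        Ideal.le_of_dvd (dvd_of_mem_normalizedFactors hmem)
      have h2 : q ≤ Q.comap (algebraMap A B) := Ideal.map_le_iff_le_comap.mp h1
      exact hcq (((hqp.isMaximal hq0).eq_of_le (Ideal.comap_ne_top _ hQ.ne_top) h2).symm)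


theorem comap_le_aux
    (F K : Type*) [Field F] [Field K] [NumberField F] [NumberField K] [Algebra F K]
    (p : Ideal (𝓞 F)) (hp : p.IsPrime) (hpbot : p ≠ ⊥)
    (P Pbar : Ideal (𝓞 K)) (hP : P.IsPrime) (hPbar : Pbar.IsPrime) (hne : P ≠ Pbar)
    (hsplit : Ideal.map (algebraMap (𝓞 F) (𝓞 K)) p = P * Pbar)
    (fplus : Ideal (𝓞 F)) (hfplusbot : fplus ≠ ⊥)
    (m : Ideal (𝓞 K))
    (hm : P * m = Ideal.map (algebraMap (𝓞 F) (𝓞 K)) fplus) :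
    Ideal.comap (algebraMap (𝓞 F) (𝓞 K)) m ≤ fplus := by
  classical
  set alg := algebraMap (𝓞 F) (𝓞 K) with halg_def
  have halg : Function.Injective alg := NumberField.RingOfIntegers.algebraMap.injective F K
  have hmapf : Ideal.map alg fplus ≠ ⊥ := by
    rwa [Ne, Ideal.map_eq_bot_iff_of_injective halg]
  have hm0 : m ≠ ⊥ := by
    rintro rfl
    rw [Ideal.mul_bot] at hm
    exact hmapf hm.symm
  have hP0 : P ≠ ⊥ := by
    rintro rfl
    rw [Ideal.bot_mul] at hm
    exact hmapf hm.symm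
  have hmapp : Ideal.map alg p ≠ ⊥ := by
    rwa [Ne, Ideal.map_eq_bot_iff_of_injective halg]
  have hPbar0 : Pbar ≠ ⊥ := by
    rintro rfl
    rw [Ideal.mul_bot] at hsplit
    exact hmapp hsplit
  have hcomapP : Ideal.comap alg P = p := by
    have h1 : p ≤ Ideal.comap alg P :=
      Ideal.map_le_iff_le_comap.mp (hsplit.le.trans Ideal.mul_le_left)
    exact ((hp.isMaximal hpbot).eq_of_le (Ideal.comap_ne_top _ hP.ne_top) h1).symm
  have hcomapPbar : Ideal.comap alg Pbar = p := by
    have h1 : p ≤ Ideal.comap alg Pbar :=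
      Ideal.map_le_iff_le_comap.mp (hsplit.le.trans Ideal.mul_le_right)
    exact ((hp.isMaximal hpbot).eq_of_le (Ideal.comap_ne_top _ hPbar.ne_top) h1).symm
  intro x hx
  rcases eq_or_ne x 0 with rfl | hx0
  · exact fplus.zero_mem
  have hxm : alg x ∈ m := hx
  have hspan0 : Ideal.span {x} ≠ ⊥ := by
    rwa [Ne, Ideal.span_singleton_eq_bot]
  have hmapspan : Ideal.map alg (Ideal.span {x}) = Ideal.span {alg x} := by
    rw [Ideal.map_span, Set.image_singleton]
  have hdvdx : m ∣ Ideal.span {alg x} :=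
    Ideal.dvd_iff_le.mpr ((Ideal.span_singleton_le_iff_mem m).mpr hxm)
  -- reduce to counting normalized factors
  rw [← Ideal.span_singleton_le_iff_mem, ← Ideal.dvd_iff_le,
    dvd_iff_normalizedFactors_le_normalizedFactors
      (by simpa [Submodule.zero_eq_bot] using hfplusbot)
      (by simpa [Submodule.zero_eq_bot] using hspan0),
    Multiset.le_iff_count]
  intro q
  by_cases hcnt : (normalizedFactors fplus).count q = 0
  · simp [hcnt]
  have hqmem : q ∈ normalizedFactors fplus := Multiset.count_ne_zero.mp hcnt
  have hqprime : Prime q := prime_of_normalized_factor q hqmem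
  have hq0 : q ≠ ⊥ := by simpa [Submodule.zero_eq_bot] using hqprime.ne_zero
  have hqp : q.IsPrime := Ideal.isPrime_of_prime hqprime
  -- choose a prime Q of 𝓞 K over q with Q ≠ P
  obtain ⟨Q, hQpr, hQ0, hQc, hQP⟩ :
      ∃ Q : Ideal (𝓞 K), Q.IsPrime ∧ Q ≠ ⊥ ∧ Ideal.comap alg Q = q ∧ Q ≠ P := by
    by_cases hqeq : q = p
    · exact ⟨Pbar, hPbar, hPbar0, by rw [hcomapPbar, hqeq], hne.symm⟩
    · haveI := hqp
      obtain ⟨Q, -, hQpr, hQc⟩ := Ideal.exists_ideal_over_prime_of_isIntegral q ⊥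
        (by rw [Ideal.comap_bot_of_injective alg halg]; exact bot_le)
      refine ⟨Q, hQpr, ?_, hQc, ?_⟩
      · rintro rfl
        rw [Ideal.comap_bot_of_injective alg halg] at hQc
        exact hq0 hQc.symm
      · rintro rfl
        exact hqeq (hQc ▸ hcomapP ▸ rfl)
  have key := count_normalizedFactors_map_aux halg Q hQpr hQ0
  have e_ne : Ideal.ramificationIdx' q Q ≠ 0 := by
    refine Ideal.IsDedekindDomain.ramificationIdx_ne_zero ?_ hQpr ?_
    · rwa [Ne, Ideal.map_eq_bot_iff_of_injective halg]
    · exact Ideal.map_le_iff_le_comap.mpr hQc.ge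
  have h1 : (normalizedFactors (Ideal.map alg fplus)).count Q
      = Ideal.ramificationIdx' q Q * (normalizedFactors fplus).count q := by
    rw [key fplus hfplusbot, hQc]
  have h2 : (normalizedFactors (Ideal.map alg (Ideal.span {x}))).count Q
      = Ideal.ramificationIdx' q Q * (normalizedFactors (Ideal.span {x})).count q := by
    rw [key _ hspan0, hQc]
  have h3 : (normalizedFactors (Ideal.map alg fplus)).count Q
      = (normalizedFactors m).count Q := by
    rw [← hm, normalizedFactors_mul (by simpa [Submodule.zero_eq_bot] using hP0)
      (by simpa [Submodule.zero_eq_bot] using hm0), Multiset.count_add,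
      normalizedFactors_irreducible (Ideal.prime_of_isPrime hP0 hP).irreducible,
      normalize_eq, Multiset.count_singleton, if_neg hQP, zero_add]
  have h4 : (normalizedFactors m).count Q
      ≤ (normalizedFactors (Ideal.span {alg x})).count Q := by
    refine Multiset.le_iff_count.mp ?_ Q
    rw [← dvd_iff_normalizedFactors_le_normalizedFactors
      (by simpa [Submodule.zero_eq_bot] using hm0)
      (by simpa [Submodule.zero_eq_bot, map_eq_zero_iff alg halg] using hx0)]
    exact hdvdx
  have h5 : Ideal.ramificationIdx' q Q * (normalizedFactors fplus).count q
      ≤ Ideal.ramificationIdx' q Q * (normalizedFactors (Ideal.span {x})).count q := by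
    rw [← h1, ← h2, h3, hmapspan]
    exact h4
  exact Nat.le_of_mul_le_mul_left h5 (Nat.pos_of_ne_zero e_ne)
end Aux

/-- Let `K/F` be a quadratic extension of number fields, `p` a prime of `O_F` split in
`O_K` as `p·O_K = P·P̄` with `P ≠ P̄`, `f⁺ ⊆ O_F` an ideal divisible by `p`,
`f = f⁺·O_K` and `m = f·P⁻¹` (so `f = P·m`).  Then the composite map
`(O_F/f⁺)^* → (O_K/f)^* → (O_K/m)^*` is injective. -/
theorem units_composite_injective_split_case
    (F K : Type*) [Field F] [Field K] [NumberField F] [NumberField K] [Algebra F K]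
    (hquad : Module.finrank F K = 2)
    (p : Ideal (𝓞 F)) (hp : p.IsPrime) (hpbot : p ≠ ⊥)
    (P Pbar : Ideal (𝓞 K)) (hP : P.IsPrime) (hPbar : Pbar.IsPrime) (hne : P ≠ Pbar)
    (hsplit : Ideal.map (algebraMap (𝓞 F) (𝓞 K)) p = P * Pbar)
    (fplus : Ideal (𝓞 F)) (hfplusbot : fplus ≠ ⊥) (hdvd : p ∣ fplus)
    (m : Ideal (𝓞 K))
    (hm : P * m = Ideal.map (algebraMap (𝓞 F) (𝓞 K)) fplus)
    (hle : Ideal.map (algebraMap (𝓞 F) (𝓞 K)) fplus ≤ m) :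
    Function.Injective
      (Units.map ((Ideal.Quotient.factor hle).comp
        (Ideal.quotientMap (Ideal.map (algebraMap (𝓞 F) (𝓞 K)) fplus)
          (algebraMap (𝓞 F) (𝓞 K)) Ideal.le_comap_map)).toMonoidHom) := by
  have hcm := comap_le_aux F K p hp hpbot P Pbar hP hPbar hne hsplit fplus hfplusbot m hm
  have hφ : Function.Injective
      ⇑((Ideal.Quotient.factor hle).comp
        (Ideal.quotientMap (Ideal.map (algebraMap (𝓞 F) (𝓞 K)) fplus)
          (algebraMap (𝓞 F) (𝓞 K)) Ideal.le_comap_map)) := by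
    intro a b hab
    obtain ⟨x, rfl⟩ := Ideal.Quotient.mk_surjective a
    obtain ⟨y, rfl⟩ := Ideal.Quotient.mk_surjective b
    have h1 : Ideal.Quotient.mk m (algebraMap (𝓞 F) (𝓞 K) x)
        = Ideal.Quotient.mk m (algebraMap (𝓞 F) (𝓞 K) y) := by
      simpa only [RingHom.comp_apply, Ideal.quotientMap_mk, Ideal.Quotient.factor_mk] using hab
    rw [Ideal.Quotient.eq] at h1 ⊢
    exact hcm (by rw [Ideal.mem_comap, map_sub]; exact h1)
  intro u v huv
  ext
  exact hφ (by simpa only [Units.coe_map, RingHom.toMonoidHom_eq_coe, MonoidHom.coe_coe] using congrArg Units.val huv)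
end
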